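/- Let Z, X_u be symmetric d×d matrices with Z ≺ X_u, let A ∈ R^{n×d}, let a be a row of A (as a column vector), and let t > 0 and δ_u > 0. Set M_u = ((X_u + δ_u AᵀA) − Z)^{-1} and assume X_u + δ_u AᵀA − Z ≻ 0 and 1/t ≥ aᵀM_u AᵀA M_u a / (δ_u · tr(A M_u AᵀA M_u Aᵀ)) + aᵀM_u a. Then tr(A((X_u + δ_u AᵀA) − (Z + t a aᵀ))^{-1} Aᵀ) ≤ tr(A(X_u − Z)^{-1} Aᵀ), i.e., the upper barrier potential does not increase after the step. -/

import Mathlib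

open Matrix

namespace Stmt18Aux

variable {d m p : ℕ}

lemma mul_vecMulVec (X : Matrix (Fin m) (Fin p) ℝ) (u : Fin p → ℝ) (v : Fin d → ℝ) :
    X * vecMulVec u v = vecMulVec (X *ᵥ u) v := by
  ext i j
  simp only [mul_apply, vecMulVec_apply, mulVec, dotProduct, Finset.sum_mul]
  exact Finset.sum_congr rfl fun k _ => by ring

lemma vecMulVec_mul (u : Fin m → ℝ) (v : Fin p → ℝ) (Y : Matrix (Fin p) (Fin d) ℝ) :
    vecMulVec u v * Y = vecMulVec u (Yᵀ *ᵥ v) := by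
  ext i j
  simp only [mul_apply, vecMulVec_apply, mulVec, dotProduct, transpose_apply, Finset.mul_sum]
  exact Finset.sum_congr rfl fun k _ => by ring

lemma vecMulVec_mul_vecMulVec (u : Fin m → ℝ) (v x : Fin p → ℝ) (y : Fin d → ℝ) :
    vecMulVec u v * vecMulVec x y = (v ⬝ᵥ x) • vecMulVec u y := by
  ext i j
  simp only [mul_apply, vecMulVec_apply, Matrix.smul_apply, smul_eq_mul, dotProduct, Finset.sum_mul]
  exact Finset.sum_congr rfl fun k _ => by ring

lemma vecMulVec_mulVec (u : Fin m → ℝ) (v x : Fin d → ℝ) :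
    vecMulVec u v *ᵥ x = (v ⬝ᵥ x) • u := by
  funext i
  simp only [mulVec, vecMulVec_apply, dotProduct, Pi.smul_apply, smul_eq_mul, Finset.sum_mul]
  exact Finset.sum_congr rfl fun k _ => by ring

lemma trace_vecMulVec (u v : Fin d → ℝ) : (vecMulVec u v).trace = u ⬝ᵥ v := by
  simp [Matrix.trace, Matrix.diag, vecMulVec_apply, dotProduct]

lemma diag_nonneg {P : Matrix (Fin d) (Fin d) ℝ} (h : P.PosSemidef) (i : Fin d) : 0 ≤ P i i := by
  have h2 := h.dotProduct_mulVec_nonneg (Pi.single i 1)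
  simpa [mulVec_single, single_dotProduct] using h2

lemma trace_nonneg {P : Matrix (Fin d) (Fin d) ℝ} (h : P.PosSemidef) : 0 ≤ P.trace := by
  simp only [Matrix.trace, Matrix.diag]
  exact Finset.sum_nonneg fun i _ => diag_nonneg h i

lemma diag_le_trace {P : Matrix (Fin d) (Fin d) ℝ} (h : P.PosSemidef) (i : Fin d) :
    P i i ≤ P.trace := by
  simp only [Matrix.trace, Matrix.diag]
  exact Finset.single_le_sum (fun j _ => diag_nonneg h j) (Finset.mem_univ i)

open scoped MatrixOrder

lemma trace_mul_nonneg {P Q : Matrix (Fin d) (Fin d) ℝ} (hP : P.PosSemidef) (hQ : Q.PosSemidef) :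
    0 ≤ (P * Q).trace := by
  have hpsd : (CFC.sqrt P * Q * CFC.sqrt P).PosSemidef := by
    have h := hQ.conjTranspose_mul_mul_same (CFC.sqrt P)
    rwa [(Matrix.nonneg_iff_posSemidef.mp (CFC.sqrt_nonneg P)).isHermitian.eq] at h
  have key : (P * Q).trace = (CFC.sqrt P * Q * CFC.sqrt P).trace := by
    conv_rhs => rw [trace_mul_cycle]
    rw [CFC.sqrt_mul_sqrt_self P hP.nonneg]
  rw [key]
  exact trace_nonneg hpsd

end Stmt18Aux

open Stmt18Aux

set_option maxHeartbeats 1000000 in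
/-- the upper-barrier step of the stable-rank BSS argument: under the stated
condition on `1/t`, adding `t·aaᵀ` to `Z` while shifting the upper wall by `δᵤ·AᵀA` does not
increase the upper barrier potential. -/
theorem stmt18 {n d : ℕ} (Z Xu : Matrix (Fin d) (Fin d) ℝ)
    (hZ : Z.IsSymm) (hXu : Xu.IsSymm)
    (A : Matrix (Fin n) (Fin d) ℝ) (a : Fin d → ℝ) (ha : ∃ i : Fin n, a = fun j => A i j)
    (t δu : ℝ) (ht : 0 < t) (hδu : 0 < δu)
    (hPD : (Xu - Z).PosDef)
    (hPD' : (Xu + δu • (Aᵀ * A) - Z).PosDef)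
    (Mu : Matrix (Fin d) (Fin d) ℝ) (hMu : Mu = (Xu + δu • (Aᵀ * A) - Z)⁻¹)
    (hstep : 1 / t ≥
        (a ⬝ᵥ (Mu * (Aᵀ * A) * Mu).mulVec a) /
          (δu * Matrix.trace (A * Mu * (Aᵀ * A) * Mu * Aᵀ)) +
        a ⬝ᵥ Mu.mulVec a) :
    Matrix.trace (A * ((Xu + δu • (Aᵀ * A)) - (Z + t • Matrix.vecMulVec a a))⁻¹ * Aᵀ) ≤
      Matrix.trace (A * (Xu - Z)⁻¹ * Aᵀ) := by
  obtain ⟨i, hai⟩ := ha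
  set B : Matrix (Fin d) (Fin d) ℝ := Aᵀ * A with hB
  set W : Matrix (Fin d) (Fin d) ℝ := Xu - Z with hW
  set N : Matrix (Fin d) (Fin d) ℝ := Xu + δu • B - Z with hN
  set V : Matrix (Fin d) (Fin d) ℝ := vecMulVec a a with hV
  have hNpd : N.PosDef := hPD'
  have hWdet : IsUnit W.det := W.isUnit_iff_isUnit_det.mp hPD.isUnit
  have hNdet : IsUnit N.det := N.isUnit_iff_isUnit_det.mp hNpd.isUnit
  -- symmetry facts
  have hBsymm : Bᵀ = B := by rw [hB, transpose_mul, transpose_transpose]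
  have hNsymm : Nᵀ = N := by
    rw [hN, transpose_sub, transpose_add, transpose_smul, hBsymm, hXu.eq, hZ.eq]
  have hMsymm : Muᵀ = Mu := by rw [hMu, transpose_nonsing_inv, hNsymm]
  have hMpd : Mu.PosDef := by rw [hMu]; exact hNpd.inv
  have hNMu : N * Mu = 1 := by rw [hMu]; exact mul_nonsing_inv N hNdet
  have hMuN : Mu * N = 1 := by rw [hMu]; exact nonsing_inv_mul N hNdet
  -- the vector a as a column of Aᵀ
  have hae : a = Aᵀ *ᵥ Pi.single i 1 := by
    funext j
    simp [hai, mulVec_single]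
  -- scalars
  set q : ℝ := a ⬝ᵥ Mu *ᵥ a with hq
  set s : ℝ := 1 - t * q with hs
  set w : Fin n → ℝ := (A * Mu) *ᵥ a with hw
  set c : ℝ := w ⬝ᵥ w with hc
  set S : Matrix (Fin n) (Fin n) ℝ := A * Mu * Aᵀ with hS
  have hSsymm : Sᵀ = S := by
    rw [hS, transpose_mul, transpose_mul, transpose_transpose, hMsymm, Matrix.mul_assoc]
  have hcval : a ⬝ᵥ (Mu * B * Mu) *ᵥ a = c := by
    have h1 : Mu * B * Mu = (A * Mu)ᵀ * (A * Mu) := by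
      rw [transpose_mul, hMsymm, hB]
      simp only [Matrix.mul_assoc]
    rw [h1, ← mulVec_mulVec, dotProduct_mulVec, vecMul_transpose, hc, hw]
  have hcnn : 0 ≤ c := by
    rw [hc]
    exact Finset.sum_nonneg fun k _ => mul_self_nonneg _
  -- T and its properties
  set T : ℝ := (A * Mu * B * Mu * Aᵀ).trace with hT
  have hSS : A * Mu * B * Mu * Aᵀ = S * S := by
    rw [hS, hB]; simp only [Matrix.mul_assoc]
  have hSSpsd : (S * S).PosSemidef := by
    have h := posSemidef_conjTranspose_mul_self S
    rwa [conjTranspose_eq_transpose_of_trivial, hSsymm] at h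
  have hTnn : 0 ≤ T := by rw [hT, hSS]; exact trace_nonneg hSSpsd
  have hwS : w = S *ᵥ Pi.single i 1 := by
    rw [hw, hae, mulVec_mulVec, hS]
  have hcT : c ≤ T := by
    have h1 : c = (S * S) i i := by
      rw [hc, hwS, dotProduct_mulVec]
      have h2 : (S *ᵥ Pi.single i 1) ᵥ* S = (S * S) *ᵥ Pi.single i 1 := by
        rw [← mulVec_transpose, hSsymm, mulVec_mulVec]
      rw [h2, dotProduct_single, mulVec_single]
      simp
    rw [h1, hT, hSS]
    exact diag_le_trace hSSpsd i
  -- rewrite the step hypothesis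
  rw [hcval] at hstep
  have hsnn : 0 ≤ s := by
    have h1 : 0 ≤ c / (δu * T) := div_nonneg hcnn (mul_nonneg hδu.le hTnn)
    have h2 : q ≤ 1 / t := by linarith [hstep]
    have h3 : t * q ≤ t * (1 / t) := mul_le_mul_of_nonneg_left h2 ht.le
    have h4 : t * (1 / t) = 1 := by field_simp
    rw [hs]; linarith
  -- B is PSD
  have hBpsd : B.PosSemidef := by
    have h := posSemidef_conjTranspose_mul_self A
    rwa [conjTranspose_eq_transpose_of_trivial] at h
  -- the goal's matrix
  have hgoal : Xu + δu • B - (Z + t • V) = N - t • V := by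
    rw [hN]; abel
  rw [hgoal]
  -- the potential identity
  have hNW : N - W = δu • B := by rw [hN, hW]; abel
  have hWM : W⁻¹ - Mu = δu • (W⁻¹ * B * Mu) := by
    have e1 : W⁻¹ * N * Mu = W⁻¹ := by rw [Matrix.mul_assoc, hNMu, Matrix.mul_one]
    have e2 : W⁻¹ * W * Mu = Mu := by rw [nonsing_inv_mul W hWdet, Matrix.one_mul]
    calc W⁻¹ - Mu = W⁻¹ * N * Mu - W⁻¹ * W * Mu := by rw [e1, e2]
      _ = W⁻¹ * (N - W) * Mu := by rw [Matrix.mul_sub W⁻¹ N W, Matrix.sub_mul]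
      _ = δu • (W⁻¹ * B * Mu) := by rw [hNW, Matrix.mul_smul, Matrix.smul_mul]
  set T' : ℝ := (A * (W⁻¹ * B * Mu) * Aᵀ).trace with hT'
  have hRHS : (A * W⁻¹ * Aᵀ).trace = (A * Mu * Aᵀ).trace + δu * T' := by
    have e1 : A * W⁻¹ * Aᵀ - A * Mu * Aᵀ = δu • (A * (W⁻¹ * B * Mu) * Aᵀ) := by
      rw [← Matrix.sub_mul, ← Matrix.mul_sub, hWM, Matrix.mul_smul, Matrix.smul_mul]
    have e2 := congrArg Matrix.trace e1
    rw [trace_sub, trace_smul] at e2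
    simp only [smul_eq_mul] at e2
    rw [hT']
    linarith
  -- T ≤ T'
  have hTT' : T ≤ T' := by
    have e1 : A * (W⁻¹ * B * Mu) * Aᵀ - A * Mu * B * Mu * Aᵀ
        = δu • (A * (W⁻¹ * B * Mu * B * Mu) * Aᵀ) := by
      have e2 : A * Mu * B * Mu * Aᵀ = A * (Mu * B * Mu) * Aᵀ := by
        simp only [Matrix.mul_assoc]
      rw [e2, ← Matrix.sub_mul, ← Matrix.mul_sub]
      have e3 : W⁻¹ * B * Mu - Mu * B * Mu = (W⁻¹ - Mu) * (B * Mu) := by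
        rw [Matrix.sub_mul]; simp only [Matrix.mul_assoc]
      rw [e3, hWM, Matrix.smul_mul, Matrix.mul_smul, Matrix.smul_mul]
      congr 2
      simp only [Matrix.mul_assoc]
    have e4 : (A * (W⁻¹ * B * Mu * B * Mu) * Aᵀ).trace
        = ((B * W⁻¹ * B) * (Mu * B * Mu)).trace := by
      rw [trace_mul_cycle A (W⁻¹ * B * Mu * B * Mu) Aᵀ, ← Matrix.mul_assoc, ← hB]
      congr 1
      simp only [Matrix.mul_assoc]
    have hP1 : (B * W⁻¹ * B).PosSemidef := by
      have h := hPD.inv.posSemidef.conjTranspose_mul_mul_same B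
      rwa [conjTranspose_eq_transpose_of_trivial, hBsymm] at h
    have hP2 : (Mu * B * Mu).PosSemidef := by
      have h := hBpsd.conjTranspose_mul_mul_same Mu
      rwa [conjTranspose_eq_transpose_of_trivial, hMsymm] at h
    have e5 := congrArg Matrix.trace e1
    rw [trace_sub, trace_smul] at e5
    simp only [smul_eq_mul] at e5
    have e6 : 0 ≤ ((B * W⁻¹ * B) * (Mu * B * Mu)).trace := trace_mul_nonneg hP1 hP2
    rw [e4] at e5
    nlinarith
  -- case split on s
  rcases eq_or_lt_of_le hsnn with hs0 | hspos
  · -- s = 0 : the matrix N - t•V is singular, its inverse is 0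
    have htq : t * q = 1 := by
      rw [hs] at hs0; linarith
    have hker : (N - t • V) *ᵥ (Mu *ᵥ a) = 0 := by
      rw [Matrix.sub_mulVec, smul_mulVec, mulVec_mulVec, hNMu, one_mulVec, hV,
        Stmt18Aux.vecMulVec_mulVec, ← hq, smul_smul, htq, one_smul, sub_self]
    have hMa : Mu *ᵥ a ≠ 0 := by
      intro h0
      have haz : a = 0 := by
        have h1 := congrArg (fun v => N *ᵥ v) h0
        simpa [mulVec_mulVec, hNMu] using h1
      have hq0 : q = 0 := by rw [hq, haz]; simp
      rw [hq0, mul_zero] at htq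
      exact zero_ne_one htq
    have hnotunit : ¬ IsUnit (N - t • V).det := by
      intro hu
      have hinj : Function.Injective ((N - t • V).mulVec) :=
        mulVec_injective_iff_isUnit.mpr ((N - t • V).isUnit_iff_isUnit_det.mpr hu)
      apply hMa
      apply hinj
      rw [hker, mulVec_zero]
    rw [nonsing_inv_apply_not_isUnit _ hnotunit]
    simp only [Matrix.mul_zero, Matrix.zero_mul, trace_zero]
    have hpsd : (A * W⁻¹ * Aᵀ).PosSemidef := by
      have h := hPD.inv.posSemidef.mul_mul_conjTranspose_same A
      rwa [conjTranspose_eq_transpose_of_trivial] at h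
    exact trace_nonneg hpsd
  · -- s > 0 : Sherman–Morrison
    have hsne : s ≠ 0 := ne_of_gt hspos
    set K : Matrix (Fin d) (Fin d) ℝ := Mu + (t / s) • (Mu * V * Mu) with hK
    have hVMV : V * Mu * V = q • V := by
      rw [hV, Stmt18Aux.vecMulVec_mul, Stmt18Aux.vecMulVec_mul_vecMulVec, hMsymm, dotProduct_comm, ← hq]
    have hVMVM : V * (Mu * V * Mu) = q • (V * Mu) := by
      calc V * (Mu * V * Mu) = (V * Mu * V) * Mu := by simp only [Matrix.mul_assoc]
        _ = q • (V * Mu) := by rw [hVMV, Matrix.smul_mul]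
    have hcoef : t / s - (t + t * (t / s) * q) = 0 := by
      have hs' : (1 : ℝ) - t * q ≠ 0 := by rw [hs] at hsne; exact hsne
      rw [hs]
      field_simp
      ring
    have e1 : N * ((t / s) • (Mu * V * Mu)) = (t / s) • (V * Mu) := by
      rw [Matrix.mul_smul]
      congr 1
      calc N * (Mu * V * Mu) = (N * Mu) * (V * Mu) := by simp only [Matrix.mul_assoc]
        _ = V * Mu := by rw [hNMu, Matrix.one_mul]
    have e2 : (t • V) * Mu = t • (V * Mu) := Matrix.smul_mul t V Mu
    have e3 : (t • V) * ((t / s) • (Mu * V * Mu)) = (t * (t / s) * q) • (V * Mu) := by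
      rw [Matrix.smul_mul, Matrix.mul_smul, hVMVM, smul_smul, smul_smul, mul_assoc]
    have hinv1 : (N - t • V) * K = 1 := by
      calc (N - t • V) * K
          = N * Mu + N * ((t / s) • (Mu * V * Mu))
            - ((t • V) * Mu + (t • V) * ((t / s) • (Mu * V * Mu))) := by
            rw [hK, Matrix.sub_mul, Matrix.mul_add, Matrix.mul_add]
        _ = 1 + (t / s) • (V * Mu) - (t • (V * Mu) + (t * (t / s) * q) • (V * Mu)) := by
            rw [hNMu, e1, e2, e3]
        _ = 1 + (t / s - (t + t * (t / s) * q)) • (V * Mu) := by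
            rw [sub_smul, add_smul]; abel
        _ = 1 := by rw [hcoef, zero_smul, add_zero]
    have hKinv : (N - t • V)⁻¹ = K := inv_eq_right_inv hinv1
    rw [hKinv]
    have htrK : (A * K * Aᵀ).trace = (A * Mu * Aᵀ).trace + (t / s) * c := by
      rw [hK, Matrix.mul_add, Matrix.add_mul, trace_add]
      congr 1
      rw [Matrix.mul_smul, Matrix.smul_mul, trace_smul, smul_eq_mul]
      congr 1
      have e5 : A * (Mu * V * Mu) * Aᵀ = vecMulVec w w := by
        have e6 : A * (Mu * V * Mu) * Aᵀ = ((A * Mu) * V) * (Mu * Aᵀ) := by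
          simp only [Matrix.mul_assoc]
        rw [e6, hV, Stmt18Aux.mul_vecMulVec, Stmt18Aux.vecMulVec_mul, hw]
        congr 1
        rw [transpose_mul, transpose_transpose, hMsymm]
      rw [e5, Stmt18Aux.trace_vecMulVec, ← hc]
    rw [htrK, hRHS]
    have key : (t / s) * c ≤ δu * T := by
      rcases eq_or_lt_of_le hTnn with hT0 | hTpos
      · have hc0 : c = 0 := le_antisymm (hT0 ▸ hcT) hcnn
        rw [hc0, mul_zero, ← hT0, mul_zero]
      · have e7 : s / t = 1 / t - q := by rw [hs]; field_simp
        have h1 : c / (δu * T) ≤ s / t := by rw [e7]; linarith [hstep]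
        have h2 : c ≤ (s / t) * (δu * T) := (div_le_iff₀ (by positivity)).mp h1
        calc (t / s) * c ≤ (t / s) * ((s / t) * (δu * T)) := by
              apply mul_le_mul_of_nonneg_left h2 (by positivity)
          _ = δu * T := by field_simp
    have hmono : δu * T ≤ δu * T' := mul_le_mul_of_nonneg_left hTT' hδu.le
    linarith
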